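/- Let (V, ω) be a symplectic vector space of dimension 2n. For k ≤ n−1, the map L: Λ^k V* → Λ^{k+2} V* is injective, and for k ≥ n−1, the map L: Λ^k V* → Λ^{k+2} V* is surjective. -/

import Mathlib

open ExteriorAlgebra

namespace HardLefAux

variable {n : ℕ} {M : Type} [AddCommGroup M] [Module ℝ M]

private lemma e0_lt (i : Fin n) : 2 * i.1 < 2 * n := by have := i.2; omega
private lemma e1_lt (i : Fin n) : 2 * i.1 + 1 < 2 * n := by have := i.2; omega
private def e0 (i : Fin n) : Fin (2 * n) := ⟨2 * i.1, e0_lt i⟩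
private def e1 (i : Fin n) : Fin (2 * n) := ⟨2 * i.1 + 1, e1_lt i⟩

noncomputable def dc (φ : Module.Dual ℝ M) :
    ExteriorAlgebra ℝ M →ₗ[ℝ] ExteriorAlgebra ℝ M :=
  CliffordAlgebra.contractLeft (Q := (0 : QuadraticForm ℝ M)) φ

lemma dc_ι_mul (φ : Module.Dual ℝ M) (v : M) (x : ExteriorAlgebra ℝ M) :
    dc φ (ι ℝ v * x) = φ v • x - ι ℝ v * dc φ x :=
  CliffordAlgebra.contractLeft_ι_mul (Q := (0 : QuadraticForm ℝ M)) (d := φ) v x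

lemma dc_one (φ : Module.Dual ℝ M) : dc φ (1 : ExteriorAlgebra ℝ M) = 0 :=
  CliffordAlgebra.contractLeft_one (Q := (0 : QuadraticForm ℝ M)) (d := φ)

lemma dc_algebraMap (φ : Module.Dual ℝ M) (r : ℝ) :
    dc φ (algebraMap ℝ (ExteriorAlgebra ℝ M) r) = 0 :=
  CliffordAlgebra.contractLeft_algebraMap (Q := (0 : QuadraticForm ℝ M)) (d := φ) r

lemma dc_ι (φ : Module.Dual ℝ M) (v : M) :
    dc φ (ι ℝ v) = algebraMap ℝ (ExteriorAlgebra ℝ M) (φ v) :=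
  CliffordAlgebra.contractLeft_ι (Q := (0 : QuadraticForm ℝ M)) (d := φ) v

/-- custom induction over an exterior power -/
lemma exteriorPower_induction {p : ℕ} {P : ExteriorAlgebra ℝ M → Prop}
    (hgen : ∀ v : Fin p → M, P (ιMulti ℝ p v))
    (hzero : P 0) (hadd : ∀ x y, P x → P y → P (x + y))
    (hsmul : ∀ (c : ℝ) x, P x → P (c • x))
    {x} (hx : x ∈ ⋀[ℝ]^p M) : P x := by
  rw [← ιMulti_span_fixedDegree] at hx
  refine Submodule.span_induction ?_ hzero (fun a b _ _ ha hb => hadd a b ha hb)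
    (fun c a _ ha => hsmul c a ha) hx
  rintro x ⟨v, rfl⟩
  exact hgen v

lemma algebraMap_mem_zeroth (r : ℝ) :
    algebraMap ℝ (ExteriorAlgebra ℝ M) r ∈ ⋀[ℝ]^0 M := by
  rw [exteriorPower, pow_zero]
  exact Submodule.mem_one.mpr ⟨r, rfl⟩

lemma mem_zeroth {x : ExteriorAlgebra ℝ M} (hx : x ∈ ⋀[ℝ]^0 M) :
    ∃ r : ℝ, algebraMap ℝ (ExteriorAlgebra ℝ M) r = x := by
  rw [exteriorPower, pow_zero] at hx
  exact Submodule.mem_one.mp hx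

lemma ι_mul_mem {p : ℕ} {x : ExteriorAlgebra ℝ M} (hx : x ∈ ⋀[ℝ]^p M) (v : M) :
    ι ℝ v * x ∈ ⋀[ℝ]^(p+1) M := by
  have h : (⋀[ℝ]^(p+1) M) = LinearMap.range (ι ℝ (M := M)) * ⋀[ℝ]^p M := pow_succ' _ _
  rw [h]
  exact Submodule.mul_mem_mul (LinearMap.mem_range_self _ v) hx

lemma dc_zeroth (φ : Module.Dual ℝ M) {x : ExteriorAlgebra ℝ M} (hx : x ∈ ⋀[ℝ]^0 M) :
    dc φ x = 0 := by
  obtain ⟨r, rfl⟩ := mem_zeroth hx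
  exact dc_algebraMap φ r

lemma dc_mem (φ : Module.Dual ℝ M) :
    ∀ (p : ℕ) (x : ExteriorAlgebra ℝ M), x ∈ ⋀[ℝ]^(p+1) M → dc φ x ∈ ⋀[ℝ]^p M := by
  intro p
  induction p with
  | zero =>
    intro x hx
    rw [exteriorPower, pow_one] at hx
    obtain ⟨m, rfl⟩ := hx
    rw [dc_ι]
    exact algebraMap_mem_zeroth _
  | succ p ih =>
    intro x hx
    refine exteriorPower_induction (P := fun y => dc φ y ∈ ⋀[ℝ]^(p+1) M) ?_ ?_ ?_ ?_ hx
    · intro v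
      rw [ιMulti_succ_apply, dc_ι_mul]
      have hw : ιMulti ℝ (p+1) (Matrix.vecTail v) ∈ ⋀[ℝ]^(p+1) M :=
        ιMulti_range ℝ (p+1) (Set.mem_range_self _)
      exact sub_mem (Submodule.smul_mem _ _ hw) (ι_mul_mem (ih _ hw) _)
    · simp
    · intro a b ha hb; rw [map_add]; exact add_mem ha hb
    · intro c a ha; rw [map_smul]; exact Submodule.smul_mem _ _ ha



variable (f : Module.Basis (Fin (2 * n)) ℝ M)

noncomputable def ww : ExteriorAlgebra ℝ M :=
  ∑ i : Fin n, ι ℝ (f (e0 i)) * ι ℝ (f (e1 i))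

noncomputable def Dd : ExteriorAlgebra ℝ M →ₗ[ℝ] ExteriorAlgebra ℝ M :=
  ∑ i : Fin n, (dc (f.coord (e1 i))) ∘ₗ (dc (f.coord (e0 i)))

noncomputable def Sv (v : M) : ExteriorAlgebra ℝ M →ₗ[ℝ] ExteriorAlgebra ℝ M :=
  ∑ i : Fin n, ((f.coord (e0 i) v) • dc (f.coord (e1 i))
    - (f.coord (e1 i) v) • dc (f.coord (e0 i)))

lemma Dd_apply (x : ExteriorAlgebra ℝ M) :
    Dd f x = ∑ i : Fin n, dc (f.coord (e1 i)) (dc (f.coord (e0 i)) x) := by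
  simp [Dd]

lemma Sv_apply (v : M) (x : ExteriorAlgebra ℝ M) :
    Sv f v x = ∑ i : Fin n, ((f.coord (e0 i) v) • dc (f.coord (e1 i)) x
      - (f.coord (e1 i) v) • dc (f.coord (e0 i)) x) := by
  simp [Sv]

lemma ww_mul_mem {p : ℕ} {x : ExteriorAlgebra ℝ M} (hx : x ∈ ⋀[ℝ]^p M) :
    ww f * x ∈ ⋀[ℝ]^(p+2) M := by
  rw [ww, Finset.sum_mul]
  refine Submodule.sum_mem _ fun i _ => ?_
  rw [mul_assoc]
  exact ι_mul_mem (ι_mul_mem hx _) _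

lemma Dd_mem (p : ℕ) {x : ExteriorAlgebra ℝ M} (hx : x ∈ ⋀[ℝ]^(p+2) M) :
    Dd f x ∈ ⋀[ℝ]^p M := by
  rw [Dd_apply]
  exact Submodule.sum_mem _ fun i _ => dc_mem _ p _ (dc_mem _ (p+1) _ hx)

lemma Dd_small {p : ℕ} (hp : p ≤ 1) {x : ExteriorAlgebra ℝ M} (hx : x ∈ ⋀[ℝ]^p M) :
    Dd f x = 0 := by
  rw [Dd_apply]
  refine Finset.sum_eq_zero fun i _ => ?_
  interval_cases p
  · rw [dc_zeroth _ hx, map_zero]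
  · exact dc_zeroth _ (dc_mem _ 0 _ hx)

lemma ι_anticomm (a b : M) : ι ℝ a * ι ℝ b = -(ι ℝ b * ι ℝ a) :=
  eq_neg_of_add_eq_zero_left (ι_add_mul_swap a b)

lemma ι_swap (a b : M) (y : ExteriorAlgebra ℝ M) :
    ι ℝ a * (ι ℝ b * y) = -(ι ℝ b * (ι ℝ a * y)) := by
  rw [← mul_assoc, ι_anticomm, neg_mul, mul_assoc]

lemma ww_ι_comm (v : M) (x : ExteriorAlgebra ℝ M) :
    ww f * (ι ℝ v * x) = ι ℝ v * (ww f * x) := by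
  rw [ww, Finset.sum_mul, Finset.sum_mul, Finset.mul_sum]
  refine Finset.sum_congr rfl fun i _ => ?_
  rw [mul_assoc, ι_swap (f (e1 i)) v x, mul_neg, ι_swap (f (e0 i)) v _, neg_neg, mul_assoc]

/-- the pairing equivalence -/
def pairEquiv (n : ℕ) : Fin n × Fin 2 ≃ Fin (2*n) where
  toFun p := ⟨2*p.1.1+p.2.1, by have := p.1.2; have := p.2.2; omega⟩
  invFun m := (⟨m.1/2, by have := m.2; omega⟩, ⟨m.1 % 2, by omega⟩)
  left_inv := by
    rintro ⟨⟨i, hi⟩, ⟨b, hb⟩⟩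
    have : (2*i+b)/2 = i := by omega
    have h2 : (2*i+b) % 2 = b := by omega
    simp [this, h2]
  right_inv := by
    rintro ⟨m, hm⟩
    simp
    omega

/-- sum over `Fin (2*n)` as a sum over pairs -/
lemma pair_sum {A : Type*} [AddCommMonoid A] (g : Fin (2*n) → A) :
    ∑ m, g m = ∑ i : Fin n, (g (e0 i) + g (e1 i)) := by
  rw [← Equiv.sum_comp (pairEquiv n) g, Fintype.sum_prod_type]
  refine Finset.sum_congr rfl fun i _ => ?_
  rw [Fin.sum_univ_two]
  have h0 : pairEquiv n (i, 0) = e0 i := by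
    apply Fin.ext; simp [pairEquiv, e0]
  have h1 : pairEquiv n (i, 1) = e1 i := by
    apply Fin.ext; simp [pairEquiv, e1]
  rw [h0, h1]

lemma ι_expand (v : M) :
    ∑ i : Fin n, ((f.coord (e0 i) v) • ι ℝ (f (e0 i)) + (f.coord (e1 i) v) • ι ℝ (f (e1 i)))
      = ι ℝ v := by
  have h : ι ℝ v = ∑ m : Fin (2*n), (f.repr v m) • ι ℝ (f m) := by
    conv_lhs => rw [← f.sum_repr v]
    rw [map_sum]
    simp_rw [map_smul]
  simp only [Module.Basis.coord_apply]
  rw [h, pair_sum (n := n) (fun m => (f.repr v m) • ι ℝ (f m))]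

lemma coord_self (m m' : Fin (2*n)) : f.coord m (f m') = if m' = m then 1 else 0 := by
  classical
  rw [Module.Basis.coord_apply, Module.Basis.repr_self_apply]

lemma e0_ne_e1 (i j : Fin n) : (e1 j = e0 i) ↔ False := by
  simp only [e0, e1, Fin.ext_iff, iff_false]
  omega

lemma e1_ne_e0 (i j : Fin n) : (e0 j = e1 i) ↔ False := by
  simp only [e0, e1, Fin.ext_iff, iff_false]
  omega

lemma e0_inj (i j : Fin n) : (e0 j = e0 i) ↔ j = i := by
  simp only [e0, Fin.ext_iff]
  omega

lemma e1_inj (i j : Fin n) : (e1 j = e1 i) ↔ j = i := by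
  simp only [e1, Fin.ext_iff]
  omega

lemma dc_ww_mul (φ : Module.Dual ℝ M) (y : ExteriorAlgebra ℝ M) :
    dc φ (ww f * y) = ww f * dc φ y
      + ∑ j : Fin n, (φ (f (e0 j)) • (ι ℝ (f (e1 j)) * y)
          - φ (f (e1 j)) • (ι ℝ (f (e0 j)) * y)) := by
  rw [ww, Finset.sum_mul, map_sum]
  have key : ∀ j : Fin n, dc φ (ι ℝ (f (e0 j)) * ι ℝ (f (e1 j)) * y)
      = ι ℝ (f (e0 j)) * ι ℝ (f (e1 j)) * dc φ y
        + (φ (f (e0 j)) • (ι ℝ (f (e1 j)) * y) - φ (f (e1 j)) • (ι ℝ (f (e0 j)) * y)) := by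
    intro j
    rw [mul_assoc, dc_ι_mul, dc_ι_mul, mul_sub, mul_smul_comm, mul_assoc]
    abel
  rw [Finset.sum_congr rfl (fun j _ => key j), Finset.sum_add_distrib, ← Finset.sum_mul]

lemma dc_coord_ww0 (i : Fin n) (y : ExteriorAlgebra ℝ M) :
    dc (f.coord (e0 i)) (ww f * y)
      = ww f * dc (f.coord (e0 i)) y + ι ℝ (f (e1 i)) * y := by
  rw [dc_ww_mul]
  congr 1
  simp only [coord_self, e0_inj, e0_ne_e1, if_false, zero_smul, sub_zero, ite_smul, one_smul]
  simp

lemma dc_coord_ww1 (i : Fin n) (y : ExteriorAlgebra ℝ M) :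
    dc (f.coord (e1 i)) (ww f * y)
      = ww f * dc (f.coord (e1 i)) y - ι ℝ (f (e0 i)) * y := by
  rw [dc_ww_mul, sub_eq_add_neg]
  congr 1
  simp only [coord_self, e1_inj, e1_ne_e0, if_false, zero_smul, zero_sub, ite_smul, one_smul]
  simp

lemma Dd_ι_mul (v : M) (x : ExteriorAlgebra ℝ M) :
    Dd f (ι ℝ v * x) = ι ℝ v * Dd f x + Sv f v x := by
  rw [Dd_apply, Dd_apply, Sv_apply, Finset.mul_sum, ← Finset.sum_add_distrib]
  refine Finset.sum_congr rfl fun i _ => ?_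
  rw [dc_ι_mul, map_sub, map_smul, dc_ι_mul]
  abel

lemma Sv_ww (v : M) (y : ExteriorAlgebra ℝ M) :
    Sv f v (ww f * y) = ww f * Sv f v y - ι ℝ v * y := by
  rw [Sv_apply, Sv_apply]
  have key : ∀ i : Fin n, (f.coord (e0 i) v) • dc (f.coord (e1 i)) (ww f * y)
      - (f.coord (e1 i) v) • dc (f.coord (e0 i)) (ww f * y)
    = (ww f * ((f.coord (e0 i) v) • dc (f.coord (e1 i)) y
        - (f.coord (e1 i) v) • dc (f.coord (e0 i)) y))
      - ((f.coord (e0 i) v) • (ι ℝ (f (e0 i)) * y)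
        + (f.coord (e1 i) v) • (ι ℝ (f (e1 i)) * y)) := by
    intro i
    rw [dc_coord_ww1, dc_coord_ww0, smul_sub, smul_add, mul_sub, mul_smul_comm, mul_smul_comm]
    abel
  rw [Finset.sum_congr rfl (fun i _ => key i), Finset.sum_sub_distrib, ← Finset.mul_sum]
  congr 1
  have h2 : ∀ i : Fin n,
      (f.coord (e0 i) v) • (ι ℝ (f (e0 i)) * y) + (f.coord (e1 i) v) • (ι ℝ (f (e1 i)) * y)
      = ((f.coord (e0 i) v) • ι ℝ (f (e0 i)) + (f.coord (e1 i) v) • ι ℝ (f (e1 i))) * y := by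
    intro i
    rw [add_mul, smul_mul_assoc, smul_mul_assoc]
  rw [Finset.sum_congr rfl (fun i _ => h2 i), ← Finset.sum_mul, ι_expand]

lemma Dd_ww : Dd f (ww f) = (n : ℝ) • 1 := by
  rw [Dd_apply]
  have h1 : ∀ i : Fin n, dc (f.coord (e0 i)) (ww f) = ι ℝ (f (e1 i)) := by
    intro i
    have h := dc_coord_ww0 f i 1
    rw [mul_one, dc_one, mul_zero, zero_add, mul_one] at h
    exact h
  have h2 : ∀ i : Fin n, dc (f.coord (e1 i)) (ι ℝ (f (e1 i))) = 1 := by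
    intro i
    rw [dc_ι, coord_self]
    simp
  simp only [h1, h2]
  rw [Finset.sum_const, Finset.card_univ, Fintype.card_fin]
  exact (Nat.cast_smul_eq_nsmul ℝ n 1).symm

lemma comm : ∀ (p : ℕ) (x : ExteriorAlgebra ℝ M), x ∈ ⋀[ℝ]^p M →
    Dd f (ww f * x) = ww f * Dd f x + ((n : ℝ) - p) • x := by
  intro p
  induction p with
  | zero =>
    intro x hx
    have hx0 : Dd f x = 0 := Dd_small f (by norm_num) hx
    obtain ⟨r, rfl⟩ := mem_zeroth hx
    rw [hx0, mul_zero, zero_add]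
    have hcomm : ww f * algebraMap ℝ (ExteriorAlgebra ℝ M) r = r • ww f := by
      rw [← Algebra.commutes r (ww f), ← Algebra.smul_def]
    rw [hcomm, map_smul, Dd_ww, Algebra.algebraMap_eq_smul_one]
    rw [Nat.cast_zero, sub_zero, smul_smul, smul_smul, mul_comm]
  | succ p ih =>
    intro x hx
    refine exteriorPower_induction (P := fun x => Dd f (ww f * x)
      = ww f * Dd f x + ((n : ℝ) - (p+1 : ℕ)) • x) ?_ ?_ ?_ ?_ hx
    · intro v
      rw [ιMulti_succ_apply]
      set w := ιMulti ℝ p (Matrix.vecTail v) with hw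
      have hwmem : w ∈ ⋀[ℝ]^p M := ιMulti_range ℝ p (Set.mem_range_self _)
      rw [ww_ι_comm, Dd_ι_mul, Dd_ι_mul, ih w hwmem, Sv_ww]
      rw [mul_add, mul_add, ← ww_ι_comm, mul_smul_comm]
      push_cast
      module
    · simp
    · intro a b ha hb
      rw [mul_add, map_add, map_add, mul_add, smul_add, ha, hb]
      abel
    · intro c a ha
      rw [mul_smul_comm, map_smul, map_smul, mul_smul_comm, ha, smul_add, smul_comm]

noncomputable def Ll : ExteriorAlgebra ℝ M →ₗ[ℝ] ExteriorAlgebra ℝ M :=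
  LinearMap.mulLeft ℝ (ww f)

lemma Ll_apply (x : ExteriorAlgebra ℝ M) : Ll f x = ww f * x := rfl

lemma Lpow_mem (m p : ℕ) {x : ExteriorAlgebra ℝ M} (hx : x ∈ ⋀[ℝ]^p M) :
    (Ll f ^ m) x ∈ ⋀[ℝ]^(p + 2*m) M := by
  induction m generalizing p x with
  | zero => simpa using hx
  | succ m ih =>
    rw [pow_succ, Module.End.mul_apply]
    have h := ih (p := p + 2) (ww_mul_mem f hx)
    have e : p + 2 + 2*m = p + 2*(m+1) := by omega
    rw [e] at h
    exact h

lemma Dpow_mem (s : ℕ) : ∀ (p : ℕ) (x : ExteriorAlgebra ℝ M), x ∈ ⋀[ℝ]^(p + 2*s) M →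
    (Dd f ^ s) x ∈ ⋀[ℝ]^p M := by
  induction s with
  | zero => intro p x hx; simpa using hx
  | succ s ih =>
    intro p x hx
    rw [pow_succ', Module.End.mul_apply]
    refine Dd_mem f p (ih (p+2) x ?_)
    have e : p + 2 + 2*s = p + 2*(s+1) := by omega
    rw [e]
    exact hx

lemma Dpow_zero (s : ℕ) : ∀ (r : ℕ), r < 2*s → ∀ x ∈ ⋀[ℝ]^r M, (Dd f ^ s) x = 0 := by
  induction s with
  | zero => intro r hr; omega
  | succ s ih =>
    intro r hr x hx
    rw [pow_succ, Module.End.mul_apply]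
    by_cases h1 : r ≤ 1
    · rw [Dd_small f h1 hx, map_zero]
    · obtain ⟨r', rfl⟩ : ∃ r', r = r' + 2 := ⟨r - 2, by omega⟩
      exact ih r' (by omega) _ (Dd_mem f r' hx)


lemma Lpow_mul (j : ℕ) (z : ExteriorAlgebra ℝ M) :
    (Ll f ^ j) (ww f * z) = (Ll f ^ (j+1)) z := by
  rw [show ww f * z = Ll f z from rfl, ← Module.End.mul_apply, ← pow_succ]

lemma Dpow_mul (j : ℕ) (z : ExteriorAlgebra ℝ M) :
    (Dd f ^ j) (Dd f z) = (Dd f ^ (j+1)) z := by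
  rw [← Module.End.mul_apply, ← pow_succ]

lemma powD : ∀ (m p : ℕ) (x : ExteriorAlgebra ℝ M), x ∈ ⋀[ℝ]^p M →
    Dd f ((Ll f ^ (m+1)) x) = (Ll f ^ (m+1)) (Dd f x)
      + (((m : ℝ)+1) * ((n : ℝ) - p - m)) • (Ll f ^ m) x := by
  intro m
  induction m with
  | zero =>
    intro p x hx
    rw [pow_one, pow_zero, Module.End.one_apply, Ll_apply, Ll_apply, comm f p x hx]
    congr 1
    push_cast
    ring_nf
  | succ m ih =>
    intro p x hx
    have h1 : (Ll f ^ (m+2)) x = (Ll f ^ (m+1)) (ww f * x) := (Lpow_mul f (m+1) x).symm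
    rw [show m+1+1 = m+2 from rfl, h1, ih (p+2) (ww f * x) (ww_mul_mem f hx),
      comm f p x hx, map_add, map_smul, Lpow_mul f (m+1) (Dd f x), Lpow_mul f m x]
    push_cast
    module

lemma powD2 : ∀ (m q : ℕ) (x : ExteriorAlgebra ℝ M), x ∈ ⋀[ℝ]^q M →
    Ll f ((Dd f ^ (m+1)) x) = (Dd f ^ (m+1)) (Ll f x)
      - (((m : ℝ)+1) * ((n : ℝ) - q + m)) • (Dd f ^ m) x := by
  intro m
  induction m with
  | zero =>
    intro q x hx
    rw [pow_one, pow_zero, Module.End.one_apply, Ll_apply, Ll_apply, comm f q x hx]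
    push_cast
    module
  | succ m ih =>
    intro q x hx
    have hstep : (Dd f ^ (m+2)) x = (Dd f ^ (m+1)) (Dd f x) := (Dpow_mul f (m+1) x).symm
    by_cases hq : q ≤ 1
    · have hdx : Dd f x = 0 := Dd_small f hq hx
      rw [show m+1+1 = m+2 from rfl, hstep, hdx, map_zero, map_zero]
      have h1 : (Dd f ^ (m+2)) (Ll f x) = 0 :=
        Dpow_zero f (m+2) (q+2) (by omega) _ (ww_mul_mem f hx)
      have h2 : (Dd f ^ (m+1)) x = 0 := by
        rw [← Dpow_mul f m x, hdx, map_zero]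
      rw [h1, h2, smul_zero, sub_zero]
    · obtain ⟨q', rfl⟩ : ∃ q', q = q' + 2 := ⟨q - 2, by omega⟩
      rw [show m+1+1 = m+2 from rfl, hstep, ih q' (Dd f x) (Dd_mem f q' hx)]
      simp only [Ll_apply]
      have hc : ww f * Dd f x = Dd f (ww f * x) - ((n:ℝ) - (q'+2:ℕ)) • x := by
        rw [comm f (q'+2) x hx]; abel
      rw [hc, map_sub, map_smul, Dpow_mul f (m+1) (ww f * x), Dpow_mul f m x]
      push_cast
      module

lemma Ll_pow_apply (j : ℕ) (z : ExteriorAlgebra ℝ M) :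
    Ll f ((Ll f ^ j) z) = (Ll f ^ (j+1)) z := by
  rw [← Module.End.mul_apply, ← pow_succ']

lemma Dd_pow_apply (j : ℕ) (z : ExteriorAlgebra ℝ M) :
    Dd f ((Dd f ^ j) z) = (Dd f ^ (j+1)) z := by
  rw [← Module.End.mul_apply, ← pow_succ']

lemma injL : ∀ (p : ℕ), ∀ (s : ℕ), p + s ≤ n → ∀ x ∈ ⋀[ℝ]^p M, (Ll f ^ s) x = 0 → x = 0 := by
  intro p
  induction p using Nat.strong_induction_on with
  | _ p IH =>
    intro s
    induction s with
    | zero =>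
      intro _ x _ hx0
      simpa using hx0
    | succ s ihs =>
      intro hps x hx h
      have hD := powD f s p x hx
      rw [h, map_zero] at hD
      -- 0 = Ll^{s+1}(Dd x) + c • Ll^s x
      have hc : (0:ℝ) < ((s:ℝ)+1) * ((n:ℝ) - p - s) := by
        have : (p:ℝ) + s + 1 ≤ n := by exact_mod_cast hps
        have h1 : (0:ℝ) < (s:ℝ)+1 := by positivity
        nlinarith
      have hDx : Dd f x = 0 := by
        by_cases h1 : p ≤ 1
        · exact Dd_small f h1 hx
        · obtain ⟨p', rfl⟩ : ∃ p', p = p' + 2 := ⟨p - 2, by omega⟩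
          have hmem : Dd f x ∈ ⋀[ℝ]^p' M := Dd_mem f p' hx
          have happ : (Ll f ^ (s+1+1)) (Dd f x) = 0 := by
            have := congrArg (Ll f) hD.symm
            rw [map_zero, map_add, map_smul, Ll_pow_apply f (s+1) (Dd f x),
              Ll_pow_apply f s x, h, smul_zero, add_zero] at this
            exact this
          exact IH p' (by omega) (s+1+1) (by omega) _ hmem happ
      rw [hDx, map_zero, zero_add] at hD
      have hLs : (Ll f ^ s) x = 0 := by
        have := hD.symm
        rcases smul_eq_zero.mp this with hcz | hz
        · exact absurd hcz (ne_of_gt hc)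
        · exact hz
      exact ihs (by omega) x hx hLs

include f in
lemma vanish {q : ℕ} (hq : 2*n < q) {x : ExteriorAlgebra ℝ M} (hx : x ∈ ⋀[ℝ]^q M) :
    x = 0 := by
  haveI : Module.Finite ℝ M := Module.Finite.of_basis f
  refine exteriorPower_induction (P := fun y => y = 0) ?_ ?_ ?_ ?_ hx
  · intro v
    refine AlternatingMap.map_linearDependent (ιMulti ℝ q) v ?_
    intro hli
    have hcard := hli.fintype_card_le_finrank
    rw [Module.finrank_eq_card_basis f] at hcard
    simp at hcard
    omega
  · rfl
  · rintro a b rfl rfl; simp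
  · rintro c a rfl; simp

lemma injD : ∀ (t q s : ℕ) (x : ExteriorAlgebra ℝ M), x ∈ ⋀[ℝ]^q M →
    2*n + 1 ≤ q + t → n + s ≤ q → (Dd f ^ s) x = 0 → x = 0 := by
  intro t
  induction t using Nat.strong_induction_on with
  | _ t IH =>
    intro q s x hx hinv hns
    by_cases hbig : 2*n < q
    · intro _; exact vanish f hbig hx
    · induction s generalizing x with
      | zero =>
        intro h0
        simpa using h0
      | succ s ihs =>
        intro h
        have hD := powD2 f s q x hx
        rw [h, map_zero] at hD
        -- 0 = Dd^{s+1}(Ll x) - c • Dd^s x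
        have hcneg : ((s:ℝ)+1) * ((n:ℝ) - q + s) < 0 := by
          have : (n:ℝ) + s + 1 ≤ q := by exact_mod_cast hns
          have h1 : (0:ℝ) < (s:ℝ)+1 := by positivity
          nlinarith
        have hLx : ww f * x = 0 := by
          have happ : (Dd f ^ (s+1+1)) (ww f * x) = 0 := by
            have := congrArg (Dd f) hD.symm
            rw [map_zero, map_sub, map_smul, Ll_apply,
              Dd_pow_apply f (s+1) (ww f * x), Dd_pow_apply f s x, h, smul_zero,
              sub_zero] at this
            exact this
          exact IH (t-2) (by omega) (q+2) (s+1+1) _ (ww_mul_mem f hx) (by omega) (by omega) happ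
        rw [Ll_apply, hLx, map_zero, zero_sub] at hD
        have hD2 : (((s:ℝ)+1) * ((n:ℝ) - q + s)) • (Dd f ^ s) x = 0 := by
          have := hD.symm
          rwa [neg_eq_zero] at this
        have hDs : (Dd f ^ s) x = 0 := by
          rcases smul_eq_zero.mp hD2 with hcz | hz
          · exact absurd hcz (ne_of_lt hcneg)
          · exact hz
        exact ihs x hx (by omega) hDs

include f in
lemma fd (p : ℕ) : FiniteDimensional ℝ (⋀[ℝ]^p M) := by
  haveI : Module.Finite ℝ M := Module.Finite.of_basis f
  rw [← Submodule.fg_iff_finiteDimensional]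
  refine Submodule.FG.pow ?_ p
  have h1 : (⊤ : Submodule ℝ M).FG := Module.finite_def.mp inferInstance
  have h2 := h1.map (ι ℝ (M := M))
  rwa [Submodule.map_top] at h2

end HardLefAux

/-!
**Statement 5.** Let `(V, ω)` be a symplectic vector space of dimension `2n` (encoded by a
Darboux basis `f` of `V*`).  For `k ≤ n − 1` (i.e. `k + 1 ≤ n`), the map
`L : Λ^k V* → Λ^{k+2} V*, η ↦ ω ∧ η` is injective, and for `k ≥ n − 1` (i.e. `n ≤ k + 1`)
it is surjective.
-/
set_option maxHeartbeats 1000000 in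
set_option synthInstance.maxHeartbeats 1000000 in
open HardLefAux in
theorem lefschetz_injective_and_surjective
    (n k : ℕ) (V : Type) [AddCommGroup V] [Module ℝ V]
    (f : Module.Basis (Fin (2 * n)) ℝ (Module.Dual ℝ V))
    (ω : ExteriorAlgebra ℝ (Module.Dual ℝ V))
    (hω : ω = ∑ i : Fin n,
      ExteriorAlgebra.ι ℝ (f ⟨2 * i.1, by have := i.2; omega⟩) *
      ExteriorAlgebra.ι ℝ (f ⟨2 * i.1 + 1, by have := i.2; omega⟩)) :
    (k + 1 ≤ n →
      Set.InjOn (fun η => ω * η) (⋀[ℝ]^k (Module.Dual ℝ V) : Set (ExteriorAlgebra ℝ (Module.Dual ℝ V)))) ∧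
    (n ≤ k + 1 →
      Set.SurjOn (fun η => ω * η) (⋀[ℝ]^k (Module.Dual ℝ V) : Set (ExteriorAlgebra ℝ (Module.Dual ℝ V)))
        (⋀[ℝ]^(k + 2) (Module.Dual ℝ V) : Set (ExteriorAlgebra ℝ (Module.Dual ℝ V)))) := by
  classical
  have hw : ω = ww f := hω
  constructor
  · intro hkn a ha b hb hab
    simp only [SetLike.mem_coe] at ha hb
    have hab' : ω * a = ω * b := hab
    have hsub : a - b ∈ ⋀[ℝ]^k (Module.Dual ℝ V) := sub_mem ha hb
    have h1 : (Ll f ^ 1) (a - b) = 0 := by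
      rw [pow_one, Ll_apply, ← hw, mul_sub, hab', sub_self]
    have h0 := injL f k 1 (by omega) _ hsub h1
    exact sub_eq_zero.mp h0
  · intro hnk θ hθ
    simp only [SetLike.mem_coe] at hθ
    by_cases hbig : 2*n < k+2
    · have hθ0 : θ = 0 := vanish f hbig hθ
      exact ⟨0, Submodule.zero_mem _, by simp [hθ0]⟩
    · push_neg at hbig
      set p := 2*n - (k+2) with hp
      set s := k+2-n with hs
      obtain ⟨s', hs'⟩ : ∃ s', s = s'+1 := ⟨s-1, by omega⟩
      haveI := fd f p
      haveI := fd f (k+2)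
      have hmapsto : ∀ x ∈ ⋀[ℝ]^p (Module.Dual ℝ V),
          (Ll f ^ s) x ∈ ⋀[ℝ]^(k+2) (Module.Dual ℝ V) := by
        intro x hx
        have h := Lpow_mem f s p hx
        rwa [show p + 2*s = k+2 by omega] at h
      have hmapsto2 : ∀ x ∈ ⋀[ℝ]^(k+2) (Module.Dual ℝ V),
          (Dd f ^ s) x ∈ ⋀[ℝ]^p (Module.Dual ℝ V) := by
        intro x hx
        exact Dpow_mem f s p x (by rwa [show p + 2*s = k+2 by omega])
      set g := (Ll f ^ s).restrict hmapsto with hg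
      have hginj : Function.Injective g := by
        intro a b hab2
        have hval : (Ll f ^ s) a.1 = (Ll f ^ s) b.1 := by
          have h := congrArg Subtype.val hab2
          simpa [hg, LinearMap.restrict_apply] using h
        have hz : (Ll f ^ s) (a.1 - b.1) = 0 := by
          rw [map_sub, hval, sub_self]
        have h0 := injL f p s (by omega) _ (sub_mem a.2 b.2) hz
        exact Subtype.ext (by rw [← sub_eq_zero]; exact h0)
      have hhinj : Function.Injective ((Dd f ^ s).restrict hmapsto2) := by
        intro a b hab2
        have hval : (Dd f ^ s) a.1 = (Dd f ^ s) b.1 := by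
          have h := congrArg Subtype.val hab2
          simpa [LinearMap.restrict_apply] using h
        have hz : (Dd f ^ s) (a.1 - b.1) = 0 := by
          rw [map_sub, hval, sub_self]
        have h0 := injD f (2*n+1) (k+2) s _ (sub_mem a.2 b.2) (by omega) (by omega) hz
        exact Subtype.ext (by rw [← sub_eq_zero]; exact h0)
      have hfr : Module.finrank ℝ (⋀[ℝ]^p (Module.Dual ℝ V))
          = Module.finrank ℝ (⋀[ℝ]^(k+2) (Module.Dual ℝ V)) :=
        le_antisymm (LinearMap.finrank_le_finrank_of_injective hginj)
          (LinearMap.finrank_le_finrank_of_injective hhinj)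
      have hgsurj : Function.Surjective g :=
        (LinearMap.injective_iff_surjective_of_finrank_eq_finrank hfr).mp hginj
      obtain ⟨σ, hσ⟩ := hgsurj ⟨θ, hθ⟩
      have hθeq : (Ll f ^ s) σ.1 = θ := by
        have h := congrArg Subtype.val hσ
        simpa [hg, LinearMap.restrict_apply] using h
      refine ⟨(Ll f ^ s') σ.1, ?_, ?_⟩
      · have h := Lpow_mem f s' p σ.2
        rwa [show p + 2*s' = k by omega] at h
      · show ω * (Ll f ^ s') σ.1 = θ
        calc ω * (Ll f ^ s') σ.1
            = Ll f ((Ll f ^ s') σ.1) := by rw [hw]; rfl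
          _ = (Ll f ^ (s'+1)) σ.1 := Ll_pow_apply f s' σ.1
          _ = θ := by rw [← hs', hθeq]
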